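/- arXiv:2106.11454 — 2 statements merged into one kernel-verified Lean document; each statement's English description precedes it below -/
import Mathlib

section
/- Suppose a sequence of agents satisfies t_1^(g) - r_1 ≤ dist_1, t_i^(g) = max(r_i, t_{i-1}^(g)) + dist_i for i ≥ 2, and r_1 ≤ r_2 ≤ ... ≤ r_m. Then for every i, the service time satisfies t_i^(g) - r_i ≤ Σ_{j=1}^{i} dist_j. -/
/-- SEQUENCE: agent 1 has service time at most `dist 1`, and each later agent
starts at `max (r i) (t (i-1))` and travels `dist i` steps; release times are
nondecreasing.  Then each service time is bounded by the prefix sum of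
distances. -/
theorem stmt_1 (m : ℕ) (t r dist : ℕ → ℕ)
    (h1 : t 1 - r 1 ≤ dist 1)
    (hrec : ∀ i, 2 ≤ i → i ≤ m → t i = max (r i) (t (i - 1)) + dist i)
    (hr : ∀ i j, 1 ≤ i → i ≤ j → j ≤ m → r i ≤ r j) :
    ∀ i ∈ Finset.Icc 1 m, t i - r i ≤ ∑ j ∈ Finset.Icc 1 i, dist j := by
  intro i hi
  rw [Finset.mem_Icc] at hi
  obtain ⟨hi1, him⟩ := hi
  induction i with
  | zero => omega
  | succ n ih =>
    rcases Nat.eq_or_lt_of_le hi1 with h | h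
    · simpa [← h] using h1
    · have hn1 : 1 ≤ n := by omega
      have hnm : n ≤ m := by omega
      have ihn := ih hn1 hnm
      have hrec' := hrec (n+1) (by omega) him
      simp only [Nat.add_sub_cancel] at hrec'
      rw [Finset.sum_Icc_succ_top (by omega : 1 ≤ n + 1)]
      rcases max_cases (r (n+1)) (t n) with ⟨hm, _⟩ | ⟨hm, hlt⟩
      · omega
      · have hrr : r n ≤ r (n+1) := hr n (n+1) hn1 (by omega) him
        omega
end

section
/- Under the assumptions of the SEQUENCE makespan bound (t_m^(g) ≤ r_n + Σ_{j=n}^{m} dist_j where n is the latest index with r_n > r_1 + Σ_{j<n} dist_j, or n = 1), and given that the optimal makespan OPT satisfies OPT ≥ max_{j∈[n,m]} (r_n + dist_j), the makespan of SEQUENCE is at most m · OPT, i.e., t_m^(g) ≤ m · OPT (assuming dist_j ≥ 1 for all j and m ≥ 1). -/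
/-- If the SEQUENCE makespan satisfies `t m ≤ r n + ∑_{j=n}^{m} dist j`,
each distance is at least 1, and the optimal makespan `OPT` satisfies
`OPT ≥ r n + dist j` for all `j ∈ [n, m]`, then `t m ≤ m * OPT`. -/
theorem stmt_3 (m n OPT : ℕ) (t r dist : ℕ → ℕ)
    (hm : 1 ≤ m) (hn1 : 1 ≤ n) (hnm : n ≤ m)
    (hdist : ∀ j ∈ Finset.Icc 1 m, 1 ≤ dist j)
    (hseq : t m ≤ r n + ∑ j ∈ Finset.Icc n m, dist j)
    (hopt : ∀ j ∈ Finset.Icc n m, r n + dist j ≤ OPT) :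
    t m ≤ m * OPT := by
  have hsplit : Finset.Icc n m = insert n (Finset.Icc (n+1) m) := by
    ext j
    simp only [Finset.mem_Icc, Finset.mem_insert]
    omega
  have hsum : ∑ j ∈ Finset.Icc n m, dist j
      = dist n + ∑ j ∈ Finset.Icc (n+1) m, dist j := by
    rw [hsplit, Finset.sum_insert (by simp)]
  have h2 : r n + dist n ≤ OPT := hopt n (by simp [hnm])
  have h1 : ∑ j ∈ Finset.Icc (n+1) m, dist j ≤ (m - n) * OPT := by
    calc ∑ j ∈ Finset.Icc (n+1) m, dist j
        ≤ (Finset.Icc (n+1) m).card * OPT := by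
          apply Finset.sum_le_card_nsmul
          intro j hj
          have hj' : j ∈ Finset.Icc n m := by
            simp only [Finset.mem_Icc] at hj ⊢; omega
          exact le_trans (Nat.le_add_left _ _) (hopt j hj')
      _ = (m - n) * OPT := by rw [Nat.card_Icc]; congr 1; omega
  have hfin : OPT + (m - n) * OPT ≤ m * OPT := by
    calc OPT + (m - n) * OPT = (m - n + 1) * OPT := by ring
      _ ≤ m * OPT := Nat.mul_le_mul_right OPT (by omega)
  calc t m ≤ r n + (dist n + ∑ j ∈ Finset.Icc (n+1) m, dist j) := by
        rw [← hsum]; exact hseq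
    _ = (r n + dist n) + ∑ j ∈ Finset.Icc (n+1) m, dist j := by ring
    _ ≤ OPT + (m - n) * OPT := Nat.add_le_add h2 h1
    _ ≤ m * OPT := hfin
end
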